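/- For the clause-set A_k consisting of all 2^k full clauses over k fixed variables (which is unsatisfiable), both the hardness and the propagation-hardness equal k. -/

import Mathlib

open scoped Classical

noncomputable section

abbrev Var : Type := ℕ
abbrev Lit : Type := Var × Bool
abbrev Clause : Type := Finset Lit
abbrev ClauseSet : Type := Finset Clause

/-- A proper clause contains no complementary pair of literals. -/
def isClause (C : Clause) : Prop := ∀ v : Var, ¬((v, true) ∈ C ∧ (v, false) ∈ C)

/-- The set of variables occurring in a clause-set. -/
def clsVars (F : ClauseSet) : Finset Var := F.sup (fun C => C.image Prod.fst)

def clauseSat (a : Var → Bool) (C : Clause) : Prop := ∃ l ∈ C, a l.1 = l.2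

def cnfSat (a : Var → Bool) (F : ClauseSet) : Prop := ∀ C ∈ F, clauseSat a C

def sat (F : ClauseSet) : Prop := ∃ a : Var → Bool, cnfSat a F

/-- A literal `x` is forced for `F` iff every satisfying total assignment of `F`
makes `x` true (equivalently, assigning `x` to 0 yields an unsatisfiable clause-set). -/
def forcedLit (F : ClauseSet) (x : Lit) : Prop :=
  ∀ a : Var → Bool, cnfSat a F → a x.1 = x.2

/-- Application `φ * F` of a partial assignment: clauses containing a literal set to 1
are removed, and literals set to 0 are removed from the remaining clauses. -/
def applyPA (φ : Var → Option Bool) (F : ClauseSet) : ClauseSet :=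
  (F.filter (fun C => ¬ ∃ l ∈ C, φ l.1 = some l.2)).image
    (fun C => C.filter (fun l => φ l.1 ≠ some (!l.2)))

/-- Assigning the single literal `x` to true (`⟨x → 1⟩ * F`): clauses containing `x`
are removed, and the complementary literal is removed from the remaining clauses. -/
def asgLit (x : Lit) (F : ClauseSet) : ClauseSet :=
  (F.filter (fun C => x ∉ C)).image (fun C => C.erase (x.1, !x.2))

/-- The reduction `r_0`: detect the empty clause. -/
def r0 (F : ClauseSet) : ClauseSet := if (∅ : Clause) ∈ F then {(∅ : Clause)} else F

/-- Fueled version of the reductions `r_k` (generalised unit-clause propagation):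
`r_0` detects the empty clause; `r_{k+1}(F) = r_{k+1}(⟨x→1⟩ * F)` whenever there
is a literal `x` of `F` with `r_k(⟨x→0⟩ * F) = {⊥}`, and otherwise `r_{k+1}(F) = F`.
The fuel (first argument) makes the recursion structural: since every assignment
removes a variable, fuel `n(F) + 1` always suffices. -/
def rkAux : ℕ → ℕ → ClauseSet → ClauseSet
  | _, 0, F => r0 F
  | 0, _ + 1, F => r0 F
  | fuel + 1, k + 1, F =>
      if h : ∃ x : Lit, x.1 ∈ clsVars F ∧
          rkAux fuel k (asgLit (x.1, !x.2) F) = {(∅ : Clause)} then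
        rkAux fuel (k + 1) (asgLit h.choose F)
      else F

/-- The reduction `r_k` (generalised unit-clause propagation at level `k`);
`r_1` is unit-clause propagation, `r_2` is failed-literal elimination. -/
def rk (k : ℕ) (F : ClauseSet) : ClauseSet := rkAux ((clsVars F).card + 1) k F

/-- `φ` is a partial assignment with variables in `V`. -/
def PAover (V : Set Var) (φ : Var → Option Bool) : Prop :=
  {v | φ v ≠ none}.Finite ∧ ∀ v : Var, φ v ≠ none → v ∈ V

/-- `hd^V(F) ≤ k`: for every partial assignment `φ` over `V` with `φ * F`
unsatisfiable, `r_k(φ * F) = {⊥}`. -/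
def hdLe (k : ℕ) (V : Set Var) (F : ClauseSet) : Prop :=
  ∀ φ : Var → Option Bool, PAover V φ →
    ¬ sat (applyPA φ F) → rk k (applyPA φ F) = {(∅ : Clause)}

/-- The relative hardness `hd^V(F)`. -/
def hdV (V : Set Var) (F : ClauseSet) : ℕ := sInf {k | hdLe k V F}

/-- `phd^V(F) ≤ k`: for every partial assignment `φ` over `V`, if `φ * F` is
unsatisfiable then `r_k(φ * F) = {⊥}`, and if `φ * F` is satisfiable then
`r_k(φ * F)` has no forced literal whose variable is in `V`. -/
def phdLe (k : ℕ) (V : Set Var) (F : ClauseSet) : Prop :=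
  ∀ φ : Var → Option Bool, PAover V φ →
    (¬ sat (applyPA φ F) → rk k (applyPA φ F) = {(∅ : Clause)}) ∧
    (sat (applyPA φ F) →
      ∀ x : Lit, x.1 ∈ V → ¬ forcedLit (rk k (applyPA φ F)) x)

/-- The relative propagation-hardness `phd^V(F)`. -/
def phdV (V : Set Var) (F : ClauseSet) : ℕ := sInf {k | phdLe k V F}

/-- Absolute hardness: `hd(F) = hd^{var(F)}(F)`. -/
def hd (F : ClauseSet) : ℕ := hdV (↑(clsVars F)) F

/-- Absolute propagation-hardness: `phd(F) = phd^{var(F)}(F)`. -/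
def phd (F : ClauseSet) : ℕ := phdV (↑(clsVars F)) F

/-- The full clause over the variables `0, …, k-1` given by a sign pattern `s`. -/
def fullClause (k : ℕ) (s : Fin k → Bool) : Clause :=
  Finset.univ.image (fun i : Fin k => ((i : ℕ), s i))

/-- `A_k`: the clause-set of all `2^k` full clauses over `k` variables. -/
def Ak (k : ℕ) : ClauseSet := Finset.univ.image (fullClause k)

/-! ### Auxiliary development -/

/-- All full clauses over a finite set `S` of variables. -/
def fullA (S : Finset Var) : ClauseSet :=
  S.powerset.image (fun T => S.image (fun v => (v, decide (v ∈ T))))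

lemma mem_fullA {S : Finset Var} {C : Clause} :
    C ∈ fullA S ↔ ∃ f : Var → Bool, C = S.image (fun v => (v, f v)) := by
  constructor
  · intro h
    rw [fullA, Finset.mem_image] at h
    obtain ⟨T, -, rfl⟩ := h
    exact ⟨fun v => decide (v ∈ T), rfl⟩
  · rintro ⟨f, rfl⟩
    rw [fullA, Finset.mem_image]
    refine ⟨S.filter (fun v => f v = true), Finset.mem_powerset.2 (Finset.filter_subset _ _), ?_⟩
    apply Finset.image_congr
    intro v hv
    have hv' : v ∈ S := hv
    simp only [Finset.mem_filter, hv', true_and]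
    cases h : f v <;> simp [h]

lemma fullA_empty : fullA ∅ = {(∅ : Clause)} := by
  simp [fullA]

lemma empty_not_mem_fullA {S : Finset Var} (hS : S.Nonempty) : (∅ : Clause) ∉ fullA S := by
  intro h
  obtain ⟨f, hf⟩ := mem_fullA.1 h
  have := Finset.image_eq_empty.1 hf.symm
  exact hS.ne_empty this

lemma fullA_ne_bot {S : Finset Var} (hS : S.Nonempty) : fullA S ≠ {(∅ : Clause)} := by
  intro h
  exact empty_not_mem_fullA hS (h ▸ Finset.mem_singleton_self _)

lemma clsVars_fullA (S : Finset Var) : clsVars (fullA S) = S := by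
  ext v
  simp only [clsVars, Finset.mem_sup]
  constructor
  · rintro ⟨C, hC, hv⟩
    obtain ⟨f, rfl⟩ := mem_fullA.1 hC
    rw [Finset.image_image] at hv
    simpa using hv
  · intro hv
    refine ⟨S.image (fun v => (v, false)), mem_fullA.2 ⟨fun _ => false, rfl⟩, ?_⟩
    rw [Finset.image_image]
    simpa using hv

lemma not_sat_fullA (S : Finset Var) : ¬ sat (fullA S) := by
  rintro ⟨a, ha⟩
  obtain ⟨l, hl, he⟩ := ha (S.image (fun v => (v, !(a v)))) (mem_fullA.2 ⟨_, rfl⟩)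
  rw [Finset.mem_image] at hl
  obtain ⟨v, hv, rfl⟩ := hl
  simp at he

lemma applyPA_fullA (φ : Var → Option Bool) (S : Finset Var) :
    applyPA φ (fullA S) = fullA (S.filter (fun v => φ v = none)) := by
  apply Finset.Subset.antisymm
  · intro D hD
    rw [applyPA, Finset.mem_image] at hD
    obtain ⟨C, hC, rfl⟩ := hD
    rw [Finset.mem_filter] at hC
    obtain ⟨hCF, hCns⟩ := hC
    obtain ⟨f, rfl⟩ := mem_fullA.1 hCF
    push_neg at hCns
    refine mem_fullA.2 ⟨f, ?_⟩
    ext l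
    simp only [Finset.mem_filter, Finset.mem_image]
    constructor
    · rintro ⟨⟨v, hv, rfl⟩, hpred⟩
      have h1 : φ v ≠ some (f v) := hCns (v, f v) (Finset.mem_image_of_mem _ hv)
      refine ⟨v, ⟨hv, ?_⟩, rfl⟩
      cases h : φ v with
      | none => rfl
      | some c =>
        rw [h] at h1 hpred
        cases c <;> cases hfv : f v <;> rw [hfv] at h1 hpred <;> simp at h1 hpred
    · rintro ⟨v, ⟨hv, hnone⟩, rfl⟩
      exact ⟨⟨v, hv, rfl⟩, by simp [hnone]⟩
  · intro D hD
    obtain ⟨f, rfl⟩ := mem_fullA.1 hD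
    set g : Var → Bool := fun v => match φ v with
      | some c => !c
      | none => f v with hg
    rw [applyPA, Finset.mem_image]
    refine ⟨S.image (fun v => (v, g v)), ?_, ?_⟩
    · rw [Finset.mem_filter]
      refine ⟨mem_fullA.2 ⟨g, rfl⟩, ?_⟩
      rintro ⟨l, hl, he⟩
      rw [Finset.mem_image] at hl
      obtain ⟨v, hv, rfl⟩ := hl
      simp only [hg] at he
      cases h : φ v <;> rw [h] at he <;> simp_all
    · ext l
      simp only [Finset.mem_filter, Finset.mem_image]
      constructor
      · rintro ⟨⟨v, hv, rfl⟩, hpred⟩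
        refine ⟨v, ⟨hv, ?_⟩, ?_⟩
        · by_contra hne
          cases h : φ v with
          | none => exact hne h
          | some c =>
            apply hpred
            simp only [hg, h]
            simp
        · have hnone : φ v = none := by
            by_contra hne
            cases h : φ v with
            | none => exact hne h
            | some c =>
              apply hpred
              simp only [hg, h]
              simp
          simp only [hg, hnone]
      · rintro ⟨v, ⟨hv, hnone⟩, rfl⟩
        refine ⟨⟨v, hv, ?_⟩, by simp [hnone]⟩
        simp only [hg, hnone]

lemma asgLit_eq (x : Lit) (F : ClauseSet) :
    asgLit x F = applyPA (fun v => if v = x.1 then some x.2 else none) F := by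
  rw [asgLit, applyPA]
  have hf : F.filter (fun C => x ∉ C)
      = F.filter (fun C => ¬ ∃ l ∈ C, (if l.1 = x.1 then some x.2 else none) = some l.2) := by
    apply Finset.filter_congr
    intro C _
    constructor
    · rintro hx ⟨l, hl, he⟩
      split at he
      · next h1 =>
        have : x.2 = l.2 := Option.some.inj he
        have : l = x := Prod.ext h1 this.symm
        exact hx (this ▸ hl)
      · exact (Option.some_ne_none _ he.symm).elim
    · intro h hx
      exact h ⟨x, hx, by simp⟩
  rw [hf]
  apply Finset.image_congr
  intro C _
  ext l
  simp only [Finset.mem_erase, Finset.mem_filter]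
  constructor
  · rintro ⟨hne, hl⟩
    refine ⟨hl, ?_⟩
    split
    · next h1 =>
      intro he
      apply hne
      have h3 : x.2 = !l.2 := Option.some.inj he
      have h2 : l.2 = !x.2 := by rw [h3, Bool.not_not]
      exact Prod.ext h1 h2
    · exact fun h => Option.some_ne_none _ h.symm
  · rintro ⟨hl, hpred⟩
    refine ⟨?_, hl⟩
    intro he
    apply hpred
    rw [he]
    simp

lemma asgLit_fullA (x : Lit) (S : Finset Var) :
    asgLit x (fullA S) = fullA (S.erase x.1) := by
  rw [asgLit_eq, applyPA_fullA]
  congr 1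
  ext v
  simp only [Finset.mem_filter, Finset.mem_erase]
  by_cases h : v = x.1 <;> simp [h, and_comm]

lemma r0_bot : r0 {(∅ : Clause)} = {(∅ : Clause)} := by
  simp [r0]

lemma lemA : ∀ fuel j (S : Finset Var), S.card ≤ fuel → S.card ≤ j →
    rkAux fuel j (fullA S) = {(∅ : Clause)} := by
  intro fuel
  induction fuel with
  | zero =>
    intro j S h0 _
    have hS : S = ∅ := Finset.card_eq_zero.1 (Nat.le_zero.1 h0)
    rw [hS, fullA_empty]
    cases j <;> simp [rkAux, r0]
  | succ f ih =>
    intro j S hf hj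
    match j with
    | 0 =>
      have hS : S = ∅ := Finset.card_eq_zero.1 (Nat.le_zero.1 hj)
      rw [hS, fullA_empty]
      simp [rkAux, r0]
    | j + 1 =>
      rcases S.eq_empty_or_nonempty with rfl | ⟨v, hv⟩
      · rw [fullA_empty, rkAux, dif_neg]
        rintro ⟨x, hx1, -⟩
        rw [← fullA_empty, clsVars_fullA] at hx1
        exact Finset.notMem_empty _ hx1
      · have hcard : 1 ≤ S.card := Finset.card_pos.2 ⟨v, hv⟩
        have hex : ∃ x : Lit, x.1 ∈ clsVars (fullA S) ∧
            rkAux f j (asgLit (x.1, !x.2) (fullA S)) = {(∅ : Clause)} := by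
          refine ⟨(v, true), by rw [clsVars_fullA]; exact hv, ?_⟩
          rw [show asgLit ((v, true).1, !(v, true).2) (fullA S) = fullA (S.erase v) from
            asgLit_fullA _ _]
          have hce : (S.erase v).card = S.card - 1 := Finset.card_erase_of_mem hv
          exact ih j _ (by omega) (by omega)
        have hstep : rkAux (f + 1) (j + 1) (fullA S)
            = rkAux f (j + 1) (asgLit hex.choose (fullA S)) := by
          rw [rkAux]
          exact dif_pos hex
        rw [hstep, asgLit_fullA]
        have hch : hex.choose.1 ∈ S :=
          (Finset.ext_iff.1 (clsVars_fullA S) _).1 hex.choose_spec.1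
        have hce : (S.erase hex.choose.1).card = S.card - 1 :=
          Finset.card_erase_of_mem hch
        exact ih (j + 1) _ (by omega) (by omega)

lemma lemB : ∀ fuel j (S : Finset Var), j < S.card → rkAux fuel j (fullA S) = fullA S := by
  intro fuel
  induction fuel with
  | zero =>
    intro j S hj
    have hS : S.Nonempty := Finset.card_pos.1 (by omega)
    cases j <;> · show r0 _ = _; rw [r0, if_neg (empty_not_mem_fullA hS)]
  | succ f ih =>
    intro j S hj
    match j with
    | 0 =>
      have hS : S.Nonempty := Finset.card_pos.1 (by omega)
      show r0 _ = _
      rw [r0, if_neg (empty_not_mem_fullA hS)]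
    | j + 1 =>
      rw [rkAux, dif_neg]
      rintro ⟨x, hx1, hx2⟩
      have hx1' : x.1 ∈ S := (Finset.ext_iff.1 (clsVars_fullA S) _).1 hx1
      rw [asgLit_fullA] at hx2
      have hce : (S.erase (x.1, !x.2).1).card = S.card - 1 :=
        Finset.card_erase_of_mem hx1'
      rw [ih j _ (by omega)] at hx2
      exact fullA_ne_bot (Finset.card_pos.1 (by omega)) hx2

lemma rk_fullA_bot {j : ℕ} {S : Finset Var} (h : S.card ≤ j) :
    rk j (fullA S) = {(∅ : Clause)} := by
  rw [rk, clsVars_fullA]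
  exact lemA _ j S (by omega) h

lemma rk_fullA_id {j : ℕ} {S : Finset Var} (h : j < S.card) :
    rk j (fullA S) = fullA S := by
  rw [rk, clsVars_fullA]
  exact lemB _ j S h

lemma Ak_eq (k : ℕ) : Ak k = fullA (Finset.range k) := by
  ext C
  simp only [Ak, Finset.mem_image, Finset.mem_univ, true_and, mem_fullA]
  constructor
  · rintro ⟨s, rfl⟩
    refine ⟨fun v => if h : v < k then s ⟨v, h⟩ else true, ?_⟩
    ext l
    simp only [fullClause, Finset.mem_image, Finset.mem_univ, true_and, Finset.mem_range]
    constructor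
    · rintro ⟨i, rfl⟩
      exact ⟨i, i.2, by simp [i.2]⟩
    · rintro ⟨v, hv, rfl⟩
      exact ⟨⟨v, hv⟩, by simp [hv]⟩
  · rintro ⟨f, rfl⟩
    refine ⟨fun i => f i, ?_⟩
    ext l
    simp only [fullClause, Finset.mem_image, Finset.mem_univ, true_and, Finset.mem_range]
    constructor
    · rintro ⟨i, rfl⟩
      exact ⟨i, i.2, rfl⟩
    · rintro ⟨v, hv, rfl⟩
      exact ⟨⟨v, hv⟩, rfl⟩

lemma applyPA_Ak (k : ℕ) (φ : Var → Option Bool) :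
    applyPA φ (Ak k) = fullA ((Finset.range k).filter (fun v => φ v = none)) := by
  rw [Ak_eq, applyPA_fullA]

lemma PAover_none (V : Set Var) : PAover V (fun _ => none) := by
  constructor
  · convert Set.finite_empty
    ext v
    simp
  · intro v hv
    exact absurd rfl hv

lemma hdLe_k (k : ℕ) (V : Set Var) : hdLe k V (Ak k) := by
  intro φ _ _
  rw [applyPA_Ak]
  exact rk_fullA_bot (le_trans (Finset.card_filter_le _ _) (by simp))

lemma not_hdLe {m k : ℕ} (h : m < k) (V : Set Var) : ¬ hdLe m V (Ak k) := by
  intro hle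
  have hap : applyPA (fun _ => none) (Ak k) = fullA (Finset.range k) := by
    rw [applyPA_Ak]
    congr 1
    exact Finset.filter_true_of_mem (fun _ _ => rfl)
  have := hle (fun _ => none) (PAover_none V) (by rw [hap]; exact not_sat_fullA _)
  rw [hap, rk_fullA_id (by simpa using h)] at this
  exact fullA_ne_bot (Finset.nonempty_range_iff.2 (by omega)) this

lemma phdLe_k (k : ℕ) (V : Set Var) : phdLe k V (Ak k) := by
  intro φ hφ
  refine ⟨hdLe_k k V φ hφ, ?_⟩
  intro hsat
  rw [applyPA_Ak] at hsat
  exact absurd hsat (not_sat_fullA _)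

lemma not_phdLe {m k : ℕ} (h : m < k) (V : Set Var) : ¬ phdLe m V (Ak k) := by
  intro hle
  apply not_hdLe h V
  intro φ hφ hunsat
  exact (hle φ hφ).1 hunsat

/-- the clause-set `A_k` of all `2^k` full clauses over `k` variables
is unsatisfiable, and both its hardness and its propagation-hardness equal `k`. -/
theorem stmt14 (k : ℕ) : ¬ sat (Ak k) ∧ hd (Ak k) = k ∧ phd (Ak k) = k := by
  refine ⟨by rw [Ak_eq]; exact not_sat_fullA _, ?_, ?_⟩
  · unfold hd hdV
    apply le_antisymm
    · exact Nat.sInf_le (hdLe_k k _)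
    · refine le_csInf ⟨k, hdLe_k k _⟩ ?_
      intro b hb
      by_contra hlt
      push_neg at hlt
      exact not_hdLe hlt _ hb
  · unfold phd phdV
    apply le_antisymm
    · exact Nat.sInf_le (phdLe_k k _)
    · refine le_csInf ⟨k, phdLe_k k _⟩ ?_
      intro b hb
      by_contra hlt
      push_neg at hlt
      exact not_phdLe hlt _ hb
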